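/- arXiv:1402.6099 — 3 statements merged into one kernel-verified Lean document; each statement's English description precedes it below -/
import Mathlib

section
/- If X and Y are vertical vector fields on the big-tangent manifold of a Finsler space both satisfying g_ij X₁ⁱ yʲ + g*ⁱʲ X²_i p_j = 0 (i.e. X, Y ∈ Γ(V_E)), then their Lie bracket satisfies G([X,Y], E) = 0; hence the vertical Liouville distribution V_E is integrable. -/
open scoped BigOperators

/-- A point of a fibre of the big-tangent manifold: `z ∘ Sum.inl = y` are the
vector coordinates, `z ∘ Sum.inr = p` the covector coordinates. -/
abbrev BigFibre (n : ℕ) := (Fin n ⊕ Fin n) → ℝ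

/-- The metric `G(X,Y) = g_ij X₁ⁱ Y₁ʲ + g*ⁱʲ X²_i Y²_j` on the vertical bundle,
induced by the Finsler fundamental tensor `g` and its `L`-dual Cartan tensor `gs`. -/
noncomputable def vertMetric {n : ℕ}
    (g gs : (Fin n → ℝ) → Fin n → Fin n → ℝ) (z : BigFibre n)
    (u v : (Fin n ⊕ Fin n) → ℝ) : ℝ :=
  (∑ i, ∑ j, g (fun a => z (Sum.inl a)) i j * u (Sum.inl i) * v (Sum.inl j))
    + ∑ i, ∑ j, gs (fun a => z (Sum.inr a)) i j * u (Sum.inr i) * v (Sum.inr j)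

/-- The fibrewise Lie bracket of two vertical vector fields on the
big-tangent manifold. -/
noncomputable def vertBracket {n : ℕ}
    (X Y : BigFibre n → (Fin n ⊕ Fin n) → ℝ) (z : BigFibre n)
    (a : Fin n ⊕ Fin n) : ℝ :=
  (∑ b, X z b * fderiv ℝ (fun w => Y w a) z (Pi.single b 1))
    - ∑ b, Y z b * fderiv ℝ (fun w => X w a) z (Pi.single b 1)

section Aux

lemma fderiv_eval {n : ℕ} (e : Fin n ⊕ Fin n) (z v : BigFibre n) :
    fderiv ℝ (fun w : BigFibre n => w e) z v = v e := by
  have h : (fun w : BigFibre n => w e) = ⇑(ContinuousLinearMap.proj (R := ℝ) (φ := fun _ : Fin n ⊕ Fin n => ℝ) e) := rfl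
  rw [h, ContinuousLinearMap.fderiv]
  rfl

lemma diff_eval {n : ℕ} (e : Fin n ⊕ Fin n) :
    Differentiable ℝ (fun w : BigFibre n => w e) :=
  (ContinuousLinearMap.proj (R := ℝ) (φ := fun _ : Fin n ⊕ Fin n => ℝ) e).differentiable

noncomputable def projl (n : ℕ) : BigFibre n →L[ℝ] (Fin n → ℝ) :=
  ContinuousLinearMap.pi fun a => ContinuousLinearMap.proj (Sum.inl a)

noncomputable def projr (n : ℕ) : BigFibre n →L[ℝ] (Fin n → ℝ) :=
  ContinuousLinearMap.pi fun a => ContinuousLinearMap.proj (Sum.inr a)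

lemma fderiv_comp_inl {n : ℕ} (f : (Fin n → ℝ) → ℝ) (hf : Differentiable ℝ f)
    (z v : BigFibre n) :
    fderiv ℝ (fun w : BigFibre n => f (fun a => w (Sum.inl a))) z v
      = fderiv ℝ f (fun a => z (Sum.inl a)) (fun a => v (Sum.inl a)) := by
  have h1 : (fun w : BigFibre n => f (fun a => w (Sum.inl a))) = f ∘ (projl n) := rfl
  rw [h1, fderiv_comp z (hf _) (projl n).differentiableAt,
    ContinuousLinearMap.fderiv]
  rfl

lemma diff_comp_inl {n : ℕ} (f : (Fin n → ℝ) → ℝ) (hf : Differentiable ℝ f) :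
    Differentiable ℝ (fun w : BigFibre n => f (fun a => w (Sum.inl a))) :=
  hf.comp (projl n).differentiable

lemma fderiv_comp_inr {n : ℕ} (f : (Fin n → ℝ) → ℝ) (hf : Differentiable ℝ f)
    (z v : BigFibre n) :
    fderiv ℝ (fun w : BigFibre n => f (fun a => w (Sum.inr a))) z v
      = fderiv ℝ f (fun a => z (Sum.inr a)) (fun a => v (Sum.inr a)) := by
  have h1 : (fun w : BigFibre n => f (fun a => w (Sum.inr a))) = f ∘ (projr n) := rfl
  rw [h1, fderiv_comp z (hf _) (projr n).differentiableAt,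
    ContinuousLinearMap.fderiv]
  rfl

lemma diff_comp_inr {n : ℕ} (f : (Fin n → ℝ) → ℝ) (hf : Differentiable ℝ f) :
    Differentiable ℝ (fun w : BigFibre n => f (fun a => w (Sum.inr a))) :=
  hf.comp (projr n).differentiable

lemma fderiv_triple {n : ℕ} (c u : BigFibre n → ℝ) (hc : Differentiable ℝ c)
    (hu : Differentiable ℝ u) (e : Fin n ⊕ Fin n) (z v : BigFibre n) :
    fderiv ℝ (fun w => c w * u w * w e) z v
      = fderiv ℝ c z v * u z * z e + c z * fderiv ℝ u z v * z e
        + c z * u z * v e := by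
  rw [fderiv_fun_mul ((hc z).fun_mul (hu z)) ((diff_eval e) z)]
  simp only [ContinuousLinearMap.add_apply, ContinuousLinearMap.smul_apply, smul_eq_mul]
  rw [fderiv_fun_mul (hc z) (hu z)]
  simp only [ContinuousLinearMap.add_apply, ContinuousLinearMap.smul_apply, smul_eq_mul]
  rw [fderiv_eval]
  ring

lemma diff_triple {n : ℕ} (c u : BigFibre n → ℝ) (hc : Differentiable ℝ c)
    (hu : Differentiable ℝ u) (e : Fin n ⊕ Fin n) :
    Differentiable ℝ (fun w => c w * u w * w e) :=
  (hc.mul hu).mul (diff_eval e)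

lemma fderiv_vm {n : ℕ} (g gs : (Fin n → ℝ) → Fin n → Fin n → ℝ)
    (Y : BigFibre n → (Fin n ⊕ Fin n) → ℝ)
    (hgdiff : ∀ i j, Differentiable ℝ (fun w => g w i j))
    (hgsdiff : ∀ i j, Differentiable ℝ (fun w => gs w i j))
    (hYdiff : ∀ a, Differentiable ℝ (fun z => Y z a))
    (z v : BigFibre n) :
    fderiv ℝ (fun w => vertMetric g gs w (Y w) w) z v
      = (∑ i, ∑ j,
          (fderiv ℝ (fun u => g u i j) (fun a => z (Sum.inl a)) (fun a => v (Sum.inl a))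
              * Y z (Sum.inl i) * z (Sum.inl j)
            + g (fun a => z (Sum.inl a)) i j * fderiv ℝ (fun w => Y w (Sum.inl i)) z v
              * z (Sum.inl j)
            + g (fun a => z (Sum.inl a)) i j * Y z (Sum.inl i) * v (Sum.inl j)))
        + ∑ i, ∑ j,
          (fderiv ℝ (fun u => gs u i j) (fun a => z (Sum.inr a)) (fun a => v (Sum.inr a))
              * Y z (Sum.inr i) * z (Sum.inr j)
            + gs (fun a => z (Sum.inr a)) i j * fderiv ℝ (fun w => Y w (Sum.inr i)) z v
              * z (Sum.inr j)
            + gs (fun a => z (Sum.inr a)) i j * Y z (Sum.inr i) * v (Sum.inr j)) := by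
  have hdg : ∀ i j, Differentiable ℝ
      (fun w : BigFibre n => g (fun a => w (Sum.inl a)) i j * Y w (Sum.inl i) * w (Sum.inl j)) :=
    fun i j => diff_triple _ _ (diff_comp_inl _ (hgdiff i j)) (hYdiff _) _
  have hdgs : ∀ i j, Differentiable ℝ
      (fun w : BigFibre n => gs (fun a => w (Sum.inr a)) i j * Y w (Sum.inr i) * w (Sum.inr j)) :=
    fun i j => diff_triple _ _ (diff_comp_inr _ (hgsdiff i j)) (hYdiff _) _
  have e1 : (fun w => vertMetric g gs w (Y w) w)
      = fun w => (∑ i, ∑ j, g (fun a => w (Sum.inl a)) i j * Y w (Sum.inl i) * w (Sum.inl j))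
          + ∑ i, ∑ j, gs (fun a => w (Sum.inr a)) i j * Y w (Sum.inr i) * w (Sum.inr j) := rfl
  rw [e1, fderiv_fun_add
      (Differentiable.fun_sum (fun i _ => Differentiable.fun_sum (fun j _ => hdg i j)) z)
      (Differentiable.fun_sum (fun i _ => Differentiable.fun_sum (fun j _ => hdgs i j)) z)]
  simp only [ContinuousLinearMap.add_apply]
  congr 1
  · rw [fderiv_fun_sum (fun i _ => (Differentiable.fun_sum (fun j _ => hdg i j)) z)]
    rw [ContinuousLinearMap.sum_apply]
    refine Finset.sum_congr rfl fun i _ => ?_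
    rw [fderiv_fun_sum (fun j _ => (hdg i j) z), ContinuousLinearMap.sum_apply]
    refine Finset.sum_congr rfl fun j _ => ?_
    rw [fderiv_triple _ _ (diff_comp_inl _ (hgdiff i j)) (hYdiff _), fderiv_comp_inl _ (hgdiff i j)]
  · rw [fderiv_fun_sum (fun i _ => (Differentiable.fun_sum (fun j _ => hdgs i j)) z)]
    rw [ContinuousLinearMap.sum_apply]
    refine Finset.sum_congr rfl fun i _ => ?_
    rw [fderiv_fun_sum (fun j _ => (hdgs i j) z), ContinuousLinearMap.sum_apply]
    refine Finset.sum_congr rfl fun j _ => ?_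
    rw [fderiv_triple _ _ (diff_comp_inr _ (hgsdiff i j)) (hYdiff _), fderiv_comp_inr _ (hgsdiff i j)]

lemma helper_delta {n : ℕ} (f : (Fin n ⊕ Fin n) → ℝ) (c : Fin n → Fin n → ℝ)
    (σ : Fin n → Fin n ⊕ Fin n) :
    ∑ b, f b * ∑ i, ∑ j, c i j * (Pi.single b 1 : BigFibre n) (σ j)
      = ∑ i, ∑ j, c i j * f (σ j) := by
  simp only [Finset.mul_sum]
  rw [Finset.sum_comm]
  refine Finset.sum_congr rfl fun i _ => ?_
  rw [Finset.sum_comm]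
  refine Finset.sum_congr rfl fun j _ => ?_
  simp [Pi.single_apply, mul_ite, mul_one, mul_zero, Finset.sum_ite_eq, mul_comm]

lemma helper_deriv {n : ℕ} (f : (Fin n ⊕ Fin n) → ℝ) (c : Fin n → Fin n → ℝ)
    (D : Fin n → (Fin n ⊕ Fin n) → ℝ) (zc : Fin n → ℝ) :
    ∑ b, f b * ∑ i, ∑ j, c i j * D i b * zc j
      = ∑ i, ∑ j, c i j * (∑ b, f b * D i b) * zc j := by
  simp only [Finset.mul_sum]
  rw [Finset.sum_comm]
  refine Finset.sum_congr rfl fun i _ => ?_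
  rw [Finset.sum_comm]
  refine Finset.sum_congr rfl fun j _ => ?_
  rw [Finset.sum_mul]
  exact Finset.sum_congr rfl fun b _ => by ring

lemma vm_symm {n : ℕ} (g gs : (Fin n → ℝ) → Fin n → Fin n → ℝ)
    (hgsym : ∀ w i j, g w i j = g w j i)
    (hgssym : ∀ w i j, gs w i j = gs w j i)
    (z : BigFibre n) (u v : (Fin n ⊕ Fin n) → ℝ) :
    vertMetric g gs z u v = vertMetric g gs z v u := by
  unfold vertMetric
  congr 1
  · rw [Finset.sum_comm]
    refine Finset.sum_congr rfl fun i _ => Finset.sum_congr rfl fun j _ => ?_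
    rw [hgsym]; ring
  · rw [Finset.sum_comm]
    refine Finset.sum_congr rfl fun i _ => Finset.sum_congr rfl fun j _ => ?_
    rw [hgssym]; ring

end Aux

/-- Theorem 2.2: if the vertical fields `X, Y` satisfy `G(X,E) = G(Y,E) = 0`,
then `G([X,Y],E) = 0`; hence the vertical Liouville distribution `V_E`
is integrable. -/
theorem liouville_distribution_integrable {n : ℕ}
    (g gs : (Fin n → ℝ) → Fin n → Fin n → ℝ)
    (X Y : BigFibre n → (Fin n ⊕ Fin n) → ℝ)
    (hgsym : ∀ w i j, g w i j = g w j i)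
    (hgssym : ∀ w i j, gs w i j = gs w j i)
    (hgdiff : ∀ i j, Differentiable ℝ (fun w => g w i j))
    (hgsdiff : ∀ i j, Differentiable ℝ (fun w => gs w i j))
    (hXdiff : ∀ a, Differentiable ℝ (fun z => X z a))
    (hYdiff : ∀ a, Differentiable ℝ (fun z => Y z a))
    (hghom : ∀ (w : Fin n → ℝ) i k,
      ∑ j, fderiv ℝ (fun u => g u i j) w (Pi.single k 1) * w j = 0)
    (hgshom : ∀ (w : Fin n → ℝ) i k,
      ∑ j, fderiv ℝ (fun u => gs u i j) w (Pi.single k 1) * w j = 0)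
    (hX : ∀ z : BigFibre n, vertMetric g gs z (X z) z = 0)
    (hY : ∀ z : BigFibre n, vertMetric g gs z (Y z) z = 0) :
    ∀ z : BigFibre n, vertMetric g gs z (vertBracket X Y z) z = 0 := by
  intro z
  -- zero derivatives of the constraint functions
  have hFY : ∀ v : BigFibre n, fderiv ℝ (fun w => vertMetric g gs w (Y w) w) z v = 0 := by
    intro v
    have h : (fun w => vertMetric g gs w (Y w) w) = fun _ : BigFibre n => (0:ℝ) := funext hY
    rw [h]; simp
  have hFX : ∀ v : BigFibre n, fderiv ℝ (fun w => vertMetric g gs w (X w) w) z v = 0 := by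
    intro v
    have h : (fun w => vertMetric g gs w (X w) w) = fun _ : BigFibre n => (0:ℝ) := funext hX
    rw [h]; simp
  -- projections of Pi.single directions
  have hll : ∀ k : Fin n, (fun a => (Pi.single (Sum.inl k) (1:ℝ) : BigFibre n) (Sum.inl a))
      = (Pi.single k 1 : Fin n → ℝ) := by
    intro k; funext a; simp [Pi.single_apply]
  have hrl : ∀ k : Fin n, (fun a => (Pi.single (Sum.inr k) (1:ℝ) : BigFibre n) (Sum.inl a))
      = (0 : Fin n → ℝ) := by
    intro k; funext a; simp [Pi.single_apply]
  have hlr : ∀ k : Fin n, (fun a => (Pi.single (Sum.inl k) (1:ℝ) : BigFibre n) (Sum.inr a))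
      = (0 : Fin n → ℝ) := by
    intro k; funext a; simp [Pi.single_apply]
  have hrr : ∀ k : Fin n, (fun a => (Pi.single (Sum.inr k) (1:ℝ) : BigFibre n) (Sum.inr a))
      = (Pi.single k 1 : Fin n → ℝ) := by
    intro k; funext a; simp [Pi.single_apply]
  -- vanishing of the metric-derivative row sums
  have hgrow : ∀ (b : Fin n ⊕ Fin n) (i : Fin n),
      ∑ j, fderiv ℝ (fun u => g u i j) (fun a => z (Sum.inl a))
        (fun a => (Pi.single b 1 : BigFibre n) (Sum.inl a)) * z (Sum.inl j) = 0 := by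
    intro b i
    cases b with
    | inl k => rw [hll k]; simpa using hghom (fun a => z (Sum.inl a)) i k
    | inr k => rw [hrl k]; simp
  have hgsrow : ∀ (b : Fin n ⊕ Fin n) (i : Fin n),
      ∑ j, fderiv ℝ (fun u => gs u i j) (fun a => z (Sum.inr a))
        (fun a => (Pi.single b 1 : BigFibre n) (Sum.inr a)) * z (Sum.inr j) = 0 := by
    intro b i
    cases b with
    | inl k => rw [hlr k]; simp
    | inr k => rw [hrr k]; simpa using hgshom (fun a => z (Sum.inr a)) i k
  have hvan_g : ∀ (W : BigFibre n → (Fin n ⊕ Fin n) → ℝ) (b : Fin n ⊕ Fin n),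
      ∑ i, ∑ j, fderiv ℝ (fun u => g u i j) (fun a => z (Sum.inl a))
        (fun a => (Pi.single b 1 : BigFibre n) (Sum.inl a)) * W z (Sum.inl i) * z (Sum.inl j) = 0 := by
    intro W b
    refine Finset.sum_eq_zero fun i _ => ?_
    have h1 : ∑ j, fderiv ℝ (fun u => g u i j) (fun a => z (Sum.inl a))
        (fun a => (Pi.single b 1 : BigFibre n) (Sum.inl a)) * W z (Sum.inl i) * z (Sum.inl j)
        = (∑ j, fderiv ℝ (fun u => g u i j) (fun a => z (Sum.inl a))
            (fun a => (Pi.single b 1 : BigFibre n) (Sum.inl a)) * z (Sum.inl j)) * W z (Sum.inl i) := by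
      rw [Finset.sum_mul]
      exact Finset.sum_congr rfl fun j _ => by ring
    rw [h1, hgrow b i, zero_mul]
  have hvan_gs : ∀ (W : BigFibre n → (Fin n ⊕ Fin n) → ℝ) (b : Fin n ⊕ Fin n),
      ∑ i, ∑ j, fderiv ℝ (fun u => gs u i j) (fun a => z (Sum.inr a))
        (fun a => (Pi.single b 1 : BigFibre n) (Sum.inr a)) * W z (Sum.inr i) * z (Sum.inr j) = 0 := by
    intro W b
    refine Finset.sum_eq_zero fun i _ => ?_
    have h1 : ∑ j, fderiv ℝ (fun u => gs u i j) (fun a => z (Sum.inr a))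
        (fun a => (Pi.single b 1 : BigFibre n) (Sum.inr a)) * W z (Sum.inr i) * z (Sum.inr j)
        = (∑ j, fderiv ℝ (fun u => gs u i j) (fun a => z (Sum.inr a))
            (fun a => (Pi.single b 1 : BigFibre n) (Sum.inr a)) * z (Sum.inr j)) * W z (Sum.inr i) := by
      rw [Finset.sum_mul]
      exact Finset.sum_congr rfl fun j _ => by ring
    rw [h1, hgsrow b i, zero_mul]
  -- expansion of the zero derivative, per direction b
  have hexp : ∀ (W : BigFibre n → (Fin n ⊕ Fin n) → ℝ),
      (∀ a, Differentiable ℝ (fun z => W z a)) →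
      (∀ v : BigFibre n, fderiv ℝ (fun w => vertMetric g gs w (W w) w) z v = 0) →
      ∀ b : Fin n ⊕ Fin n,
      (∑ i, ∑ j, g (fun a => z (Sum.inl a)) i j
          * fderiv ℝ (fun w => W w (Sum.inl i)) z (Pi.single b 1) * z (Sum.inl j))
        + (∑ i, ∑ j, gs (fun a => z (Sum.inr a)) i j
            * fderiv ℝ (fun w => W w (Sum.inr i)) z (Pi.single b 1) * z (Sum.inr j))
        + ((∑ i, ∑ j, g (fun a => z (Sum.inl a)) i j * W z (Sum.inl i)
              * (Pi.single b 1 : BigFibre n) (Sum.inl j))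
          + ∑ i, ∑ j, gs (fun a => z (Sum.inr a)) i j * W z (Sum.inr i)
              * (Pi.single b 1 : BigFibre n) (Sum.inr j)) = 0 := by
    intro W hWdiff hFW b
    have h := hFW (Pi.single b 1)
    rw [fderiv_vm g gs W hgdiff hgsdiff hWdiff z (Pi.single b 1)] at h
    simp only [Finset.sum_add_distrib] at h
    have h1 := hvan_g W b
    have h2 := hvan_gs W b
    linarith [h, h1, h2]
  -- weighted sums
  have keyY :
      (∑ i, ∑ j, g (fun a => z (Sum.inl a)) i j
          * (∑ b, X z b * fderiv ℝ (fun w => Y w (Sum.inl i)) z (Pi.single b 1)) * z (Sum.inl j))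
        + (∑ i, ∑ j, gs (fun a => z (Sum.inr a)) i j
            * (∑ b, X z b * fderiv ℝ (fun w => Y w (Sum.inr i)) z (Pi.single b 1)) * z (Sum.inr j))
        + vertMetric g gs z (Y z) (X z) = 0 := by
    have hkey : ∑ b : Fin n ⊕ Fin n, X z b *
        ((∑ i, ∑ j, g (fun a => z (Sum.inl a)) i j
            * fderiv ℝ (fun w => Y w (Sum.inl i)) z (Pi.single b 1) * z (Sum.inl j))
          + (∑ i, ∑ j, gs (fun a => z (Sum.inr a)) i j
              * fderiv ℝ (fun w => Y w (Sum.inr i)) z (Pi.single b 1) * z (Sum.inr j))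
          + ((∑ i, ∑ j, g (fun a => z (Sum.inl a)) i j * Y z (Sum.inl i)
                * (Pi.single b 1 : BigFibre n) (Sum.inl j))
            + ∑ i, ∑ j, gs (fun a => z (Sum.inr a)) i j * Y z (Sum.inr i)
                * (Pi.single b 1 : BigFibre n) (Sum.inr j))) = 0 := by
      simp only [hexp Y hYdiff hFY, mul_zero, Finset.sum_const_zero]
    simp only [mul_add, Finset.sum_add_distrib] at hkey
    have e2 : ∑ b : Fin n ⊕ Fin n, X z b * ∑ i, ∑ j, g (fun a => z (Sum.inl a)) i j
          * fderiv ℝ (fun w => Y w (Sum.inl i)) z (Pi.single b 1) * z (Sum.inl j)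
        = ∑ i, ∑ j, g (fun a => z (Sum.inl a)) i j
          * (∑ b, X z b * fderiv ℝ (fun w => Y w (Sum.inl i)) z (Pi.single b 1)) * z (Sum.inl j) :=
      helper_deriv _ _ _ _
    have e2' : ∑ b : Fin n ⊕ Fin n, X z b * ∑ i, ∑ j, gs (fun a => z (Sum.inr a)) i j
          * fderiv ℝ (fun w => Y w (Sum.inr i)) z (Pi.single b 1) * z (Sum.inr j)
        = ∑ i, ∑ j, gs (fun a => z (Sum.inr a)) i j
          * (∑ b, X z b * fderiv ℝ (fun w => Y w (Sum.inr i)) z (Pi.single b 1)) * z (Sum.inr j) :=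
      helper_deriv _ _ _ _
    have e3 : ∑ b : Fin n ⊕ Fin n, X z b * ∑ i, ∑ j, g (fun a => z (Sum.inl a)) i j * Y z (Sum.inl i)
          * (Pi.single b 1 : BigFibre n) (Sum.inl j)
        = ∑ i, ∑ j, g (fun a => z (Sum.inl a)) i j * Y z (Sum.inl i) * X z (Sum.inl j) :=
      helper_delta (X z) (fun i j => g (fun a => z (Sum.inl a)) i j * Y z (Sum.inl i)) Sum.inl
    have e3' : ∑ b : Fin n ⊕ Fin n, X z b * ∑ i, ∑ j, gs (fun a => z (Sum.inr a)) i j * Y z (Sum.inr i)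
          * (Pi.single b 1 : BigFibre n) (Sum.inr j)
        = ∑ i, ∑ j, gs (fun a => z (Sum.inr a)) i j * Y z (Sum.inr i) * X z (Sum.inr j) :=
      helper_delta (X z) (fun i j => gs (fun a => z (Sum.inr a)) i j * Y z (Sum.inr i)) Sum.inr
    rw [e2, e2', e3, e3'] at hkey
    unfold vertMetric
    linarith [hkey]
  have keyX :
      (∑ i, ∑ j, g (fun a => z (Sum.inl a)) i j
          * (∑ b, Y z b * fderiv ℝ (fun w => X w (Sum.inl i)) z (Pi.single b 1)) * z (Sum.inl j))
        + (∑ i, ∑ j, gs (fun a => z (Sum.inr a)) i j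
            * (∑ b, Y z b * fderiv ℝ (fun w => X w (Sum.inr i)) z (Pi.single b 1)) * z (Sum.inr j))
        + vertMetric g gs z (X z) (Y z) = 0 := by
    have hkey : ∑ b : Fin n ⊕ Fin n, Y z b *
        ((∑ i, ∑ j, g (fun a => z (Sum.inl a)) i j
            * fderiv ℝ (fun w => X w (Sum.inl i)) z (Pi.single b 1) * z (Sum.inl j))
          + (∑ i, ∑ j, gs (fun a => z (Sum.inr a)) i j
              * fderiv ℝ (fun w => X w (Sum.inr i)) z (Pi.single b 1) * z (Sum.inr j))
          + ((∑ i, ∑ j, g (fun a => z (Sum.inl a)) i j * X z (Sum.inl i)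
                * (Pi.single b 1 : BigFibre n) (Sum.inl j))
            + ∑ i, ∑ j, gs (fun a => z (Sum.inr a)) i j * X z (Sum.inr i)
                * (Pi.single b 1 : BigFibre n) (Sum.inr j))) = 0 := by
      simp only [hexp X hXdiff hFX, mul_zero, Finset.sum_const_zero]
    simp only [mul_add, Finset.sum_add_distrib] at hkey
    have e2 : ∑ b : Fin n ⊕ Fin n, Y z b * ∑ i, ∑ j, g (fun a => z (Sum.inl a)) i j
          * fderiv ℝ (fun w => X w (Sum.inl i)) z (Pi.single b 1) * z (Sum.inl j)
        = ∑ i, ∑ j, g (fun a => z (Sum.inl a)) i j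
          * (∑ b, Y z b * fderiv ℝ (fun w => X w (Sum.inl i)) z (Pi.single b 1)) * z (Sum.inl j) :=
      helper_deriv _ _ _ _
    have e2' : ∑ b : Fin n ⊕ Fin n, Y z b * ∑ i, ∑ j, gs (fun a => z (Sum.inr a)) i j
          * fderiv ℝ (fun w => X w (Sum.inr i)) z (Pi.single b 1) * z (Sum.inr j)
        = ∑ i, ∑ j, gs (fun a => z (Sum.inr a)) i j
          * (∑ b, Y z b * fderiv ℝ (fun w => X w (Sum.inr i)) z (Pi.single b 1)) * z (Sum.inr j) :=
      helper_deriv _ _ _ _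
    have e3 : ∑ b : Fin n ⊕ Fin n, Y z b * ∑ i, ∑ j, g (fun a => z (Sum.inl a)) i j * X z (Sum.inl i)
          * (Pi.single b 1 : BigFibre n) (Sum.inl j)
        = ∑ i, ∑ j, g (fun a => z (Sum.inl a)) i j * X z (Sum.inl i) * Y z (Sum.inl j) :=
      helper_delta (Y z) (fun i j => g (fun a => z (Sum.inl a)) i j * X z (Sum.inl i)) Sum.inl
    have e3' : ∑ b : Fin n ⊕ Fin n, Y z b * ∑ i, ∑ j, gs (fun a => z (Sum.inr a)) i j * X z (Sum.inr i)
          * (Pi.single b 1 : BigFibre n) (Sum.inr j)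
        = ∑ i, ∑ j, gs (fun a => z (Sum.inr a)) i j * X z (Sum.inr i) * Y z (Sum.inr j) :=
      helper_delta (Y z) (fun i j => gs (fun a => z (Sum.inr a)) i j * X z (Sum.inr i)) Sum.inr
    rw [e2, e2', e3, e3'] at hkey
    unfold vertMetric
    linarith [hkey]
  have hsymm : vertMetric g gs z (Y z) (X z) = vertMetric g gs z (X z) (Y z) :=
    vm_symm g gs hgsym hgssym z (Y z) (X z)
  -- final computation
  unfold vertMetric vertBracket
  simp only [mul_sub, sub_mul, Finset.sum_sub_distrib]
  unfold vertMetric at keyY keyX hsymm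
  linarith [keyY, keyX, hsymm]
end

section
/- The Liouville fields satisfy ∇_{E₁}E₁ = E₁, ∇_{E₁}E₂ = ∇_{E₂}E₁ = 0, ∇_{E₂}E₂ = E₂ on any leaf L_V; consequently the leaves of the foliation spanned by {E₁, E₂} are totally geodesic submanifolds of the leaves of the vertical foliation V. -/
open scoped BigOperators

variable {m : Type*} [Fintype m] [DecidableEq m]

/-- Partial derivative in the `i`-th coordinate direction. -/
noncomputable def pd (f : (m → ℝ) → ℝ) (z : m → ℝ) (i : m) : ℝ :=
  fderiv ℝ f z (Pi.single i 1)

/-- Covariant derivative `(∇_X Y)ᵏ` for Christoffel symbols `Γ`. -/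
noncomputable def covDeriv (Γ : (m → ℝ) → m → m → m → ℝ)
    (X Y : (m → ℝ) → m → ℝ) (z : m → ℝ) (k : m) : ℝ :=
  (∑ i, X z i * pd (fun w => Y w k) z i)
    + ∑ i, ∑ j, Γ z k i j * X z i * Y z j

/-- The first Liouville field `E₁ = yⁱ ∂/∂yⁱ` on a fibre of the big-tangent
manifold (`inl` = `y`-indices, `inr` = `p`-indices). -/
def liouvilleE1 {n : ℕ} (z : (Fin n ⊕ Fin n) → ℝ) : (Fin n ⊕ Fin n) → ℝ
  | .inl i => z (Sum.inl i)
  | .inr _ => 0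

/-- The second Liouville field `E₂ = p_i ∂/∂p_i`. -/
def liouvilleE2 {n : ℕ} (z : (Fin n ⊕ Fin n) → ℝ) : (Fin n ⊕ Fin n) → ℝ
  | .inl _ => 0
  | .inr i => z (Sum.inr i)

set_option linter.unusedSectionVars false

lemma diff_coord (a : m) : Differentiable ℝ (fun w : m → ℝ => w a) :=
  (ContinuousLinearMap.proj (R := ℝ) (φ := fun _ : m => ℝ) a).differentiable

lemma pd_mul_coord (f : (m → ℝ) → ℝ) (hf : Differentiable ℝ f) (a : m)
    (z : m → ℝ) (i : m) :
    pd (fun w => f w * w a) z i = pd f z i * z a + f z * (Pi.single i 1 : m → ℝ) a := by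
  unfold pd
  rw [fderiv_fun_mul (hf z) ((diff_coord a) z)]
  have h2 : fderiv ℝ (fun w : m → ℝ => w a) z
      = ContinuousLinearMap.proj (R := ℝ) (φ := fun _ : m => ℝ) a :=
    (ContinuousLinearMap.proj (R := ℝ) (φ := fun _ : m => ℝ) a).fderiv
  simp [h2]
  ring

lemma pd_const (c : ℝ) (z : m → ℝ) (i : m) : pd (fun _ => c) z i = 0 := by
  unfold pd; simp

lemma covDeriv_eq {n : ℕ}
    (Γ : ((Fin n ⊕ Fin n) → ℝ) → (Fin n ⊕ Fin n) → (Fin n ⊕ Fin n) →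
      (Fin n ⊕ Fin n) → ℝ)
    (hmix : ∀ (z : (Fin n ⊕ Fin n) → ℝ) (k : Fin n ⊕ Fin n) (i j : Fin n),
      Γ z k (Sum.inl i) (Sum.inr j) = 0 ∧ Γ z k (Sum.inr i) (Sum.inl j) = 0)
    (hΓy : ∀ (z : (Fin n ⊕ Fin n) → ℝ) (k : Fin n ⊕ Fin n) (i : Fin n),
      ∑ j, Γ z k (Sum.inl i) (Sum.inl j) * z (Sum.inl j) = 0)
    (hΓp : ∀ (z : (Fin n ⊕ Fin n) → ℝ) (k : Fin n ⊕ Fin n) (i : Fin n),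
      ∑ j, Γ z k (Sum.inr i) (Sum.inr j) * z (Sum.inr j) = 0)
    (α β γ' δ : ((Fin n ⊕ Fin n) → ℝ) → ℝ)
    (hγ' : Differentiable ℝ γ') (hδ : Differentiable ℝ δ)
    (z : (Fin n ⊕ Fin n) → ℝ) (k : Fin n ⊕ Fin n) :
    covDeriv Γ (fun w a => α w * liouvilleE1 w a + β w * liouvilleE2 w a)
      (fun w a => γ' w * liouvilleE1 w a + δ w * liouvilleE2 w a) z k
    = ((∑ i, (α z * liouvilleE1 z i + β z * liouvilleE2 z i) * pd γ' z i)
        + γ' z * α z) * liouvilleE1 z k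
      + ((∑ i, (α z * liouvilleE1 z i + β z * liouvilleE2 z i) * pd δ z i)
        + δ z * β z) * liouvilleE2 z k := by
  unfold covDeriv
  -- Christoffel part vanishes
  have hS2 : (∑ i, ∑ j, Γ z k i j
      * (α z * liouvilleE1 z i + β z * liouvilleE2 z i)
      * (γ' z * liouvilleE1 z j + δ z * liouvilleE2 z j)) = 0 := by
    rw [Fintype.sum_sum_type]
    have h1 : ∀ i : Fin n, (∑ j, Γ z k (Sum.inl i) j
        * (α z * liouvilleE1 z (Sum.inl i) + β z * liouvilleE2 z (Sum.inl i))
        * (γ' z * liouvilleE1 z j + δ z * liouvilleE2 z j)) = 0 := by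
      intro i
      rw [Fintype.sum_sum_type]
      have ha : (∑ j : Fin n, Γ z k (Sum.inl i) (Sum.inl j)
          * (α z * liouvilleE1 z (Sum.inl i) + β z * liouvilleE2 z (Sum.inl i))
          * (γ' z * liouvilleE1 z (Sum.inl j) + δ z * liouvilleE2 z (Sum.inl j)))
          = (α z * z (Sum.inl i) * γ' z)
            * ∑ j, Γ z k (Sum.inl i) (Sum.inl j) * z (Sum.inl j) := by
        rw [Finset.mul_sum]
        refine Finset.sum_congr rfl fun j _ => ?_
        simp [liouvilleE1, liouvilleE2]; ring
      have hb : (∑ j : Fin n, Γ z k (Sum.inl i) (Sum.inr j)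
          * (α z * liouvilleE1 z (Sum.inl i) + β z * liouvilleE2 z (Sum.inl i))
          * (γ' z * liouvilleE1 z (Sum.inr j) + δ z * liouvilleE2 z (Sum.inr j))) = 0 :=
        Finset.sum_eq_zero fun j _ => by rw [(hmix z k i j).1]; ring
      rw [ha, hb, hΓy z k i]; ring
    have h2 : ∀ i : Fin n, (∑ j, Γ z k (Sum.inr i) j
        * (α z * liouvilleE1 z (Sum.inr i) + β z * liouvilleE2 z (Sum.inr i))
        * (γ' z * liouvilleE1 z j + δ z * liouvilleE2 z j)) = 0 := by
      intro i
      rw [Fintype.sum_sum_type]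
      have ha : (∑ j : Fin n, Γ z k (Sum.inr i) (Sum.inl j)
          * (α z * liouvilleE1 z (Sum.inr i) + β z * liouvilleE2 z (Sum.inr i))
          * (γ' z * liouvilleE1 z (Sum.inl j) + δ z * liouvilleE2 z (Sum.inl j))) = 0 :=
        Finset.sum_eq_zero fun j _ => by rw [(hmix z k i j).2]; ring
      have hb : (∑ j : Fin n, Γ z k (Sum.inr i) (Sum.inr j)
          * (α z * liouvilleE1 z (Sum.inr i) + β z * liouvilleE2 z (Sum.inr i))
          * (γ' z * liouvilleE1 z (Sum.inr j) + δ z * liouvilleE2 z (Sum.inr j)))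
          = (β z * z (Sum.inr i) * δ z)
            * ∑ j, Γ z k (Sum.inr i) (Sum.inr j) * z (Sum.inr j) := by
        rw [Finset.mul_sum]
        refine Finset.sum_congr rfl fun j _ => ?_
        simp [liouvilleE1, liouvilleE2]; ring
      rw [ha, hb, hΓp z k i]; ring
    rw [Finset.sum_eq_zero fun i _ => h1 i, Finset.sum_eq_zero fun i _ => h2 i, add_zero]
  rw [hS2, add_zero]
  cases k with
  | inl a =>
    have hY : (fun w => γ' w * liouvilleE1 w (Sum.inl a) + δ w * liouvilleE2 w (Sum.inl a))
        = fun w => γ' w * w (Sum.inl a) := by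
      funext w; simp [liouvilleE1, liouvilleE2]
    rw [hY]
    have hpd : ∀ i, pd (fun w => γ' w * w (Sum.inl a)) z i
        = pd γ' z i * z (Sum.inl a) + γ' z * (Pi.single i 1 : (Fin n ⊕ Fin n) → ℝ) (Sum.inl a) :=
      fun i => pd_mul_coord γ' hγ' _ z i
    simp only [hpd, mul_add, Finset.sum_add_distrib]
    have h1 : (∑ i, (α z * liouvilleE1 z i + β z * liouvilleE2 z i)
        * (pd γ' z i * z (Sum.inl a)))
        = (∑ i, (α z * liouvilleE1 z i + β z * liouvilleE2 z i) * pd γ' z i)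
          * z (Sum.inl a) := by
      rw [Finset.sum_mul]
      exact Finset.sum_congr rfl fun i _ => by ring
    have h2 : (∑ i, (α z * liouvilleE1 z i + β z * liouvilleE2 z i)
        * (γ' z * (Pi.single i 1 : (Fin n ⊕ Fin n) → ℝ) (Sum.inl a)))
        = (α z * liouvilleE1 z (Sum.inl a) + β z * liouvilleE2 z (Sum.inl a)) * γ' z := by
      simp [Pi.single_apply, mul_ite]
    rw [h1, h2]
    simp [liouvilleE1, liouvilleE2]; ring
  | inr a =>
    have hY : (fun w => γ' w * liouvilleE1 w (Sum.inr a) + δ w * liouvilleE2 w (Sum.inr a))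
        = fun w => δ w * w (Sum.inr a) := by
      funext w; simp [liouvilleE1, liouvilleE2]
    rw [hY]
    have hpd : ∀ i, pd (fun w => δ w * w (Sum.inr a)) z i
        = pd δ z i * z (Sum.inr a) + δ z * (Pi.single i 1 : (Fin n ⊕ Fin n) → ℝ) (Sum.inr a) :=
      fun i => pd_mul_coord δ hδ _ z i
    simp only [hpd, mul_add, Finset.sum_add_distrib]
    have h1 : (∑ i, (α z * liouvilleE1 z i + β z * liouvilleE2 z i)
        * (pd δ z i * z (Sum.inr a)))
        = (∑ i, (α z * liouvilleE1 z i + β z * liouvilleE2 z i) * pd δ z i)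
          * z (Sum.inr a) := by
      rw [Finset.sum_mul]
      exact Finset.sum_congr rfl fun i _ => by ring
    have h2 : (∑ i, (α z * liouvilleE1 z i + β z * liouvilleE2 z i)
        * (δ z * (Pi.single i 1 : (Fin n ⊕ Fin n) → ℝ) (Sum.inr a)))
        = (α z * liouvilleE1 z (Sum.inr a) + β z * liouvilleE2 z (Sum.inr a)) * δ z := by
      simp [Pi.single_apply, mul_ite]
    rw [h1, h2]
    simp [liouvilleE1, liouvilleE2]; ring

/-- `∇_{E₁}E₁ = E₁`, `∇_{E₁}E₂ = ∇_{E₂}E₁ = 0`, `∇_{E₂}E₂ = E₂`, and the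
leaves of the foliation spanned by `{E₁,E₂}` are totally geodesic in the
leaves of the vertical foliation. -/
theorem liouville_fields_totally_geodesic {n : ℕ}
    (Γ : ((Fin n ⊕ Fin n) → ℝ) → (Fin n ⊕ Fin n) → (Fin n ⊕ Fin n) →
      (Fin n ⊕ Fin n) → ℝ)
    -- mixed Christoffel symbols vanish
    (hmix : ∀ (z : (Fin n ⊕ Fin n) → ℝ) (k : Fin n ⊕ Fin n) (i j : Fin n),
      Γ z k (Sum.inl i) (Sum.inr j) = 0 ∧ Γ z k (Sum.inr i) (Sum.inl j) = 0)
    -- `Cᵏ_ij yʲ = 0` and `C^{ij}_k p_j = 0`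
    (hΓy : ∀ (z : (Fin n ⊕ Fin n) → ℝ) (k : Fin n ⊕ Fin n) (i : Fin n),
      ∑ j, Γ z k (Sum.inl i) (Sum.inl j) * z (Sum.inl j) = 0)
    (hΓp : ∀ (z : (Fin n ⊕ Fin n) → ℝ) (k : Fin n ⊕ Fin n) (i : Fin n),
      ∑ j, Γ z k (Sum.inr i) (Sum.inr j) * z (Sum.inr j) = 0) :
    (∀ (z : (Fin n ⊕ Fin n) → ℝ) (k : Fin n ⊕ Fin n),
      covDeriv Γ liouvilleE1 liouvilleE1 z k = liouvilleE1 z k) ∧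
    (∀ (z : (Fin n ⊕ Fin n) → ℝ) (k : Fin n ⊕ Fin n),
      covDeriv Γ liouvilleE1 liouvilleE2 z k = 0) ∧
    (∀ (z : (Fin n ⊕ Fin n) → ℝ) (k : Fin n ⊕ Fin n),
      covDeriv Γ liouvilleE2 liouvilleE1 z k = 0) ∧
    (∀ (z : (Fin n ⊕ Fin n) → ℝ) (k : Fin n ⊕ Fin n),
      covDeriv Γ liouvilleE2 liouvilleE2 z k = liouvilleE2 z k) ∧
    -- total geodesy: `∇_X Y` stays in the span of `{E₁, E₂}` for sections
    -- `X, Y` of that foliation with differentiable coefficients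
    (∀ (α β γ' δ : ((Fin n ⊕ Fin n) → ℝ) → ℝ),
      Differentiable ℝ γ' → Differentiable ℝ δ →
      ∀ z : (Fin n ⊕ Fin n) → ℝ,
        (fun k => covDeriv Γ
            (fun w a => α w * liouvilleE1 w a + β w * liouvilleE2 w a)
            (fun w a => γ' w * liouvilleE1 w a + δ w * liouvilleE2 w a) z k)
          ∈ Submodule.span ℝ {liouvilleE1 z, liouvilleE2 z}) := by
  
  refine ⟨?_, ?_, ?_, ?_, ?_⟩
  · intro z k
    have h := covDeriv_eq Γ hmix hΓy hΓp (fun _ => 1) (fun _ => 0) (fun _ => 1)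
      (fun _ => 0) (differentiable_const 1) (differentiable_const 0) z k
    simp only [one_mul, zero_mul, add_zero, zero_add, pd_const, mul_zero,
      Finset.sum_const_zero] at h
    rw [h]
  · intro z k
    have h := covDeriv_eq Γ hmix hΓy hΓp (fun _ => 1) (fun _ => 0) (fun _ => 0)
      (fun _ => 1) (differentiable_const 0) (differentiable_const 1) z k
    simp only [one_mul, zero_mul, add_zero, zero_add, pd_const, mul_zero, mul_one,
      Finset.sum_const_zero] at h
    rw [h]
  · intro z k
    have h := covDeriv_eq Γ hmix hΓy hΓp (fun _ => 0) (fun _ => 1) (fun _ => 1)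
      (fun _ => 0) (differentiable_const 1) (differentiable_const 0) z k
    simp only [one_mul, zero_mul, add_zero, zero_add, pd_const, mul_zero, mul_one,
      Finset.sum_const_zero] at h
    rw [h]
  · intro z k
    have h := covDeriv_eq Γ hmix hΓy hΓp (fun _ => 0) (fun _ => 1) (fun _ => 0)
      (fun _ => 1) (differentiable_const 0) (differentiable_const 1) z k
    simp only [one_mul, zero_mul, add_zero, zero_add, pd_const, mul_zero, mul_one,
      Finset.sum_const_zero] at h
    rw [h]
  · intro α β γ' δ hγ' hδ z
    have key : (fun k => covDeriv Γ
        (fun w a => α w * liouvilleE1 w a + β w * liouvilleE2 w a)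
        (fun w a => γ' w * liouvilleE1 w a + δ w * liouvilleE2 w a) z k)
        = ((∑ i, (α z * liouvilleE1 z i + β z * liouvilleE2 z i) * pd γ' z i)
            + γ' z * α z) • liouvilleE1 z
          + ((∑ i, (α z * liouvilleE1 z i + β z * liouvilleE2 z i) * pd δ z i)
            + δ z * β z) • liouvilleE2 z := by
      funext k
      rw [covDeriv_eq Γ hmix hΓy hΓp α β γ' δ hγ' hδ z k]
      simp [smul_eq_mul]
    rw [key]
    exact Submodule.add_mem _
      (Submodule.smul_mem _ _ (Submodule.subset_span (by simp)))
      (Submodule.smul_mem _ _ (Submodule.subset_span (by simp)))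
end

section
/- For E' = K²E₁ − F²E₂ one has ∇_{E'}E' = −K²F² E + (K² − F²) E', which is not a section of the line distribution spanned by E' (whenever FK ≠ 0); hence integral curves of E' are not geodesics of leaves of the vertical foliation. -/
open scoped BigOperators

variable {m : Type*} [Fintype m] [DecidableEq m]

lemma sum_mul_pd (f : (m → ℝ) → ℝ) (z x : m → ℝ) :
    ∑ i, x i * pd f z i = fderiv ℝ f z x := by
  have hx : x = ∑ i, x i • (Pi.single i 1 : m → ℝ) := by
    funext j
    simp [Pi.single_apply, Finset.sum_ite_eq']
  conv_rhs => rw [hx]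
  rw [map_sum]
  simp [pd, smul_eq_mul]

lemma fderiv_mul_proj (f : (m → ℝ) → ℝ) (z : m → ℝ) (hf : DifferentiableAt ℝ f z)
    (k : m) (v : m → ℝ) :
    fderiv ℝ (fun w => f w * w k) z v = fderiv ℝ f z v * z k + f z * v k := by
  have hproj : DifferentiableAt ℝ (fun w : m → ℝ => w k) z :=
    (ContinuousLinearMap.proj (R := ℝ) (φ := fun _ : m => ℝ) k).differentiableAt
  rw [fderiv_fun_mul hf hproj]
  have : fderiv ℝ (fun w : m → ℝ => w k) z
      = ContinuousLinearMap.proj (R := ℝ) (φ := fun _ : m => ℝ) k :=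
    (ContinuousLinearMap.proj (R := ℝ) (φ := fun _ : m => ℝ) k).fderiv
  simp [this, smul_eq_mul]
  ring

/-- For `E' = K²E₁ − F²E₂` one has
`∇_{E'}E' = −K²F² E + (K² − F²) E'`, which does not lie in the line spanned by
`E'` (when `FK ≠ 0`); hence integral curves of `E'` are not geodesics of
leaves of the vertical foliation. -/
theorem liouville_Eprime_not_geodesic {n : ℕ}
    (Γ : ((Fin n ⊕ Fin n) → ℝ) → (Fin n ⊕ Fin n) → (Fin n ⊕ Fin n) →
      (Fin n ⊕ Fin n) → ℝ)
    (F2 K2 : ((Fin n ⊕ Fin n) → ℝ) → ℝ)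
    (hmix : ∀ (z : (Fin n ⊕ Fin n) → ℝ) (k : Fin n ⊕ Fin n) (i j : Fin n),
      Γ z k (Sum.inl i) (Sum.inr j) = 0 ∧ Γ z k (Sum.inr i) (Sum.inl j) = 0)
    (hΓy : ∀ (z : (Fin n ⊕ Fin n) → ℝ) (k : Fin n ⊕ Fin n) (i : Fin n),
      ∑ j, Γ z k (Sum.inl i) (Sum.inl j) * z (Sum.inl j) = 0)
    (hΓp : ∀ (z : (Fin n ⊕ Fin n) → ℝ) (k : Fin n ⊕ Fin n) (i : Fin n),
      ∑ j, Γ z k (Sum.inr i) (Sum.inr j) * z (Sum.inr j) = 0)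
    (hF2diff : Differentiable ℝ F2) (hK2diff : Differentiable ℝ K2)
    -- homogeneity: `E₁(F²) = 2F²`, `E₂(F²) = 0`, `E₁(K²) = 0`, `E₂(K²) = 2K²`
    (hF2E1 : ∀ z, fderiv ℝ F2 z (liouvilleE1 z) = 2 * F2 z)
    (hF2E2 : ∀ z, fderiv ℝ F2 z (liouvilleE2 z) = 0)
    (hK2E1 : ∀ z, fderiv ℝ K2 z (liouvilleE1 z) = 0)
    (hK2E2 : ∀ z, fderiv ℝ K2 z (liouvilleE2 z) = 2 * K2 z) :
    -- `∇_{E'}E' = −K²F² E + (K² − F²) E'`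
    (∀ (z : (Fin n ⊕ Fin n) → ℝ) (k : Fin n ⊕ Fin n),
      covDeriv Γ
          (fun w a => K2 w * liouvilleE1 w a - F2 w * liouvilleE2 w a)
          (fun w a => K2 w * liouvilleE1 w a - F2 w * liouvilleE2 w a) z k
        = -(K2 z * F2 z) * z k
            + (K2 z - F2 z) * (K2 z * liouvilleE1 z k - F2 z * liouvilleE2 z k)) ∧
    -- `∇_{E'}E'` is not a section of the line distribution `{E'}`
    (∀ z : (Fin n ⊕ Fin n) → ℝ, 0 < F2 z → 0 < K2 z →
      LinearIndependent ℝ ![liouvilleE1 z, liouvilleE2 z] →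
      (fun k => covDeriv Γ
          (fun w a => K2 w * liouvilleE1 w a - F2 w * liouvilleE2 w a)
          (fun w a => K2 w * liouvilleE1 w a - F2 w * liouvilleE2 w a) z k)
        ∉ Submodule.span ℝ
            {fun k => K2 z * liouvilleE1 z k - F2 z * liouvilleE2 z k}) := by
  have key : ∀ (z : (Fin n ⊕ Fin n) → ℝ) (k : Fin n ⊕ Fin n),
      covDeriv Γ
          (fun w a => K2 w * liouvilleE1 w a - F2 w * liouvilleE2 w a)
          (fun w a => K2 w * liouvilleE1 w a - F2 w * liouvilleE2 w a) z k
        = -(K2 z * F2 z) * z k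
            + (K2 z - F2 z) * (K2 z * liouvilleE1 z k - F2 z * liouvilleE2 z k) := by
    intro z k
    set v : (Fin n ⊕ Fin n) → ℝ :=
      fun a => K2 z * liouvilleE1 z a - F2 z * liouvilleE2 z a with hv
    -- fderiv of K2 and F2 in direction v
    have hK2v : fderiv ℝ K2 z v = -(2 * F2 z * K2 z) := by
      have : v = K2 z • liouvilleE1 z - F2 z • liouvilleE2 z := by
        funext a; simp [hv]
      rw [this, map_sub, map_smul, map_smul, hK2E1, hK2E2]
      simp [smul_eq_mul]; ring
    have hF2v : fderiv ℝ F2 z v = 2 * K2 z * F2 z := by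
      have : v = K2 z • liouvilleE1 z - F2 z • liouvilleE2 z := by
        funext a; simp [hv]
      rw [this, map_sub, map_smul, map_smul, hF2E1, hF2E2]
      simp [smul_eq_mul]; ring
    -- the Christoffel part vanishes
    have hGamma : (∑ i, ∑ j, Γ z k i j * v i * v j) = 0 := by
      have hvl : ∀ i : Fin n, v (Sum.inl i) = K2 z * z (Sum.inl i) := by
        intro i; simp [hv, liouvilleE1, liouvilleE2]
      have hvr : ∀ i : Fin n, v (Sum.inr i) = -(F2 z * z (Sum.inr i)) := by
        intro i; simp [hv, liouvilleE1, liouvilleE2]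
      rw [Fintype.sum_sum_type]
      have h1 : ∀ i : Fin n, (∑ j, Γ z k (Sum.inl i) j * v (Sum.inl i) * v j) = 0 := by
        intro i
        rw [Fintype.sum_sum_type]
        have ha : (∑ j, Γ z k (Sum.inl i) (Sum.inl j) * v (Sum.inl i) * v (Sum.inl j)) = 0 := by
          have : (∑ j, Γ z k (Sum.inl i) (Sum.inl j) * v (Sum.inl i) * v (Sum.inl j))
              = (v (Sum.inl i) * K2 z) * ∑ j, Γ z k (Sum.inl i) (Sum.inl j) * z (Sum.inl j) := by
            rw [Finset.mul_sum]; apply Finset.sum_congr rfl; intro j _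
            rw [hvl j]; ring
          rw [this, hΓy, mul_zero]
        have hb : (∑ j, Γ z k (Sum.inl i) (Sum.inr j) * v (Sum.inl i) * v (Sum.inr j)) = 0 := by
          apply Finset.sum_eq_zero; intro j _
          rw [(hmix z k i j).1]; ring
        rw [ha, hb, add_zero]
      have h2 : ∀ i : Fin n, (∑ j, Γ z k (Sum.inr i) j * v (Sum.inr i) * v j) = 0 := by
        intro i
        rw [Fintype.sum_sum_type]
        have ha : (∑ j, Γ z k (Sum.inr i) (Sum.inl j) * v (Sum.inr i) * v (Sum.inl j)) = 0 := by
          apply Finset.sum_eq_zero; intro j _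
          rw [(hmix z k i j).2]
          ring
        have hb : (∑ j, Γ z k (Sum.inr i) (Sum.inr j) * v (Sum.inr i) * v (Sum.inr j)) = 0 := by
          have : (∑ j, Γ z k (Sum.inr i) (Sum.inr j) * v (Sum.inr i) * v (Sum.inr j))
              = (v (Sum.inr i) * -(F2 z)) * ∑ j, Γ z k (Sum.inr i) (Sum.inr j) * z (Sum.inr j) := by
            rw [Finset.mul_sum]; apply Finset.sum_congr rfl; intro j _
            rw [hvr j]; ring
          rw [this, hΓp, mul_zero]
        rw [ha, hb, zero_add]
      rw [Finset.sum_eq_zero fun i _ => h1 i, Finset.sum_eq_zero fun i _ => h2 i, add_zero]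
    rw [covDeriv, hGamma, add_zero]
    rw [sum_mul_pd]
    cases k with
    | inl a =>
      have heq : (fun w => K2 w * liouvilleE1 w (Sum.inl a) - F2 w * liouvilleE2 w (Sum.inl a))
          = fun w => K2 w * w (Sum.inl a) - F2 w * 0 := by
        funext w; simp [liouvilleE1, liouvilleE2]
      rw [heq]
      simp only [mul_zero, sub_zero]
      rw [fderiv_mul_proj K2 z (hK2diff z) (Sum.inl a) v, hK2v]
      have : v (Sum.inl a) = K2 z * z (Sum.inl a) := by
        simp [hv, liouvilleE1, liouvilleE2]
      rw [this]
      simp [liouvilleE1, liouvilleE2]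
      ring
    | inr a =>
      have heq : (fun w => K2 w * liouvilleE1 w (Sum.inr a) - F2 w * liouvilleE2 w (Sum.inr a))
          = fun w => K2 w * 0 - F2 w * w (Sum.inr a) := by
        funext w; simp [liouvilleE1, liouvilleE2]
      rw [heq]
      simp only [mul_zero, zero_sub]
      have heq2 : (fun w : (Fin n ⊕ Fin n) → ℝ => -(F2 w * w (Sum.inr a)))
          = fun w => (fun w => F2 w * w (Sum.inr a)) w * (-1 : ℝ) := by
        funext w; ring
      have hneg : fderiv ℝ (fun w : (Fin n ⊕ Fin n) → ℝ => -(F2 w * w (Sum.inr a))) z v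
          = -(fderiv ℝ (fun w : (Fin n ⊕ Fin n) → ℝ => F2 w * w (Sum.inr a)) z v) := by
        rw [fderiv_fun_neg]; rfl
      rw [hneg, fderiv_mul_proj F2 z (hF2diff z) (Sum.inr a) v, hF2v]
      have : v (Sum.inr a) = -(F2 z * z (Sum.inr a)) := by
        simp [hv, liouvilleE1, liouvilleE2]
      rw [this]
      simp [liouvilleE1, liouvilleE2]
      ring
  refine ⟨key, ?_⟩
  intro z hF hK hli hmem
  rw [Submodule.mem_span_singleton] at hmem
  obtain ⟨c, hc⟩ := hmem
  -- rewrite both sides in the basis E1, E2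
  have hE : ∀ k, z k = liouvilleE1 z k + liouvilleE2 z k := by
    intro k; cases k with
    | inl a => simp [liouvilleE1, liouvilleE2]
    | inr a => simp [liouvilleE1, liouvilleE2]
  have hfun : (fun k => covDeriv Γ
          (fun w a => K2 w * liouvilleE1 w a - F2 w * liouvilleE2 w a)
          (fun w a => K2 w * liouvilleE1 w a - F2 w * liouvilleE2 w a) z k)
      = (-(K2 z * F2 z) + (K2 z - F2 z) * K2 z) • liouvilleE1 z
        + (-(K2 z * F2 z) - (K2 z - F2 z) * F2 z) • liouvilleE2 z := by
    funext k
    rw [key z k, hE k]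
    simp [smul_eq_mul]
    ring
  rw [hfun] at hc
  have hc' : (c * K2 z) • liouvilleE1 z + (-(c * F2 z)) • liouvilleE2 z
      = (-(K2 z * F2 z) + (K2 z - F2 z) * K2 z) • liouvilleE1 z
        + (-(K2 z * F2 z) - (K2 z - F2 z) * F2 z) • liouvilleE2 z := by
    rw [← hc]
    funext k
    simp [smul_eq_mul]
    ring
  have hzero : (c * K2 z - (-(K2 z * F2 z) + (K2 z - F2 z) * K2 z)) • liouvilleE1 z
      + (-(c * F2 z) - (-(K2 z * F2 z) - (K2 z - F2 z) * F2 z)) • liouvilleE2 z = 0 := by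
    rw [sub_smul, sub_smul]
    rw [sub_add_sub_comm, hc', sub_self]
  have := (LinearIndependent.pair_iff.mp hli) _ _ hzero
  obtain ⟨h1, h2⟩ := this
  have e1 : c * K2 z = -(K2 z * F2 z) + (K2 z - F2 z) * K2 z := by linarith [sub_eq_zero.mp (by linarith : c * K2 z - (-(K2 z * F2 z) + (K2 z - F2 z) * K2 z) = 0)]
  have e2 : -(c * F2 z) = -(K2 z * F2 z) - (K2 z - F2 z) * F2 z := by linarith
  -- combine: F2 * e1 + K2 * e2 gives contradiction
  have : K2 z * F2 z * (K2 z + F2 z) = 0 := by nlinarith [e1, e2]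
  nlinarith [mul_pos hK hF, mul_pos (mul_pos hK hF) (add_pos hK hF)]
end
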